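/- Let n ≥ 1, let q and q' be positive integers, and let s, s' ∈ ℤⁿ with gcd(q, s₁, …, sₙ) = 1 and gcd(q', s'₁, …, s'ₙ) = 1. If for every k ≥ 0 one has #{a ∈ ℤⁿ : Σᵢ aᵢsᵢ ≡ 0 (mod q), ‖a‖₁ = k} = #{a ∈ ℤⁿ : Σᵢ aᵢs'ᵢ ≡ 0 (mod q'), ‖a‖₁ = k}, then q = q'. -/

import Mathlib

open Finset Filter


open Finset

lemma finset_gcd_bezout {ι : Type*} [DecidableEq ι] (s : ι → ℤ) (t : Finset ι) :
    ∃ c : ι → ℤ, ∑ i ∈ t, c i * s i = t.gcd s := by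
  classical
  induction t using Finset.induction_on with
  | empty => exact ⟨0, by simp⟩
  | @insert a t ha ih =>
    obtain ⟨c, hc⟩ := ih
    rw [Finset.gcd_insert]
    set g := t.gcd s with hg
    refine ⟨fun i => if i = a then Int.gcdA (s a) g else Int.gcdB (s a) g * c i, ?_⟩
    rw [Finset.sum_insert ha]
    have h1 : gcd (s a) g = (Int.gcd (s a) g : ℤ) := (Int.coe_gcd _ _).symm
    rw [h1, Int.gcd_eq_gcd_ab]
    have : ∑ i ∈ t, (if i = a then Int.gcdA (s a) g else Int.gcdB (s a) g * c i) * s i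
        = Int.gcdB (s a) g * ∑ i ∈ t, c i * s i := by
      rw [Finset.mul_sum]
      refine Finset.sum_congr rfl fun i hi => ?_
      have : i ≠ a := fun h => ha (h ▸ hi)
      simp [this, mul_assoc]
    rw [this, hc]
    simp only [if_pos rfl, if_true, eq_self_iff_true]
    ring

lemma ker_count (n q : ℕ) (hn : 1 ≤ n) (hq : 0 < q) [NeZero q] (s : Fin n → ℤ)
    (hs : Int.gcd (q : ℤ) (Finset.univ.gcd s) = 1) :
    (Finset.univ.filter (fun x : Fin n → ZMod q => ∑ i, x i * (s i : ZMod q) = 0)).card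
      = q ^ (n - 1) := by
  set φ : (Fin n → ZMod q) →+ ZMod q :=
    { toFun := fun x => ∑ i, x i * (s i : ZMod q)
      map_zero' := by simp
      map_add' := fun x y => by simp [add_mul, Finset.sum_add_distrib] }
  have hone : ∃ x : Fin n → ZMod q, ∑ i, x i * (s i : ZMod q) = 1 := by
    obtain ⟨c, hc⟩ := finset_gcd_bezout s Finset.univ
    set g := Finset.univ.gcd s with hg
    have hbez : (1 : ℤ) = (q : ℤ) * Int.gcdA q g + g * Int.gcdB q g := by
      have := Int.gcd_eq_gcd_ab (q : ℤ) g
      rw [hs] at this; exact_mod_cast this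
    refine ⟨fun i => ((c i * Int.gcdB (q : ℤ) g : ℤ) : ZMod q), ?_⟩
    have h2 : ∑ i, ((c i * Int.gcdB (q : ℤ) g : ℤ) : ZMod q) * (s i : ZMod q)
        = (((∑ i, c i * s i) * Int.gcdB (q : ℤ) g : ℤ) : ZMod q) := by
      push_cast
      rw [Finset.sum_mul]
      refine Finset.sum_congr rfl fun i _ => by ring
    rw [h2, hc]
    have h3 : ((g * Int.gcdB (q : ℤ) g : ℤ) : ZMod q) = ((1 : ℤ) : ZMod q) := by
      rw [hbez]; push_cast; simp
    rw [h3]; norm_cast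
  have hsurj : Function.Surjective φ := by
    obtain ⟨x, hx⟩ := hone
    intro y
    refine ⟨fun i => y * x i, ?_⟩
    show ∑ i, (y * x i) * (s i : ZMod q) = y
    calc ∑ i, (y * x i) * (s i : ZMod q) = y * ∑ i, x i * (s i : ZMod q) := by
          rw [Finset.mul_sum]; exact Finset.sum_congr rfl fun i _ => by ring
      _ = y := by rw [hx, mul_one]
  have hcard : Nat.card (Fin n → ZMod q) = Nat.card (ZMod q) * Nat.card φ.ker := by
    have := AddSubgroup.card_eq_card_quotient_mul_card_addSubgroup φ.ker
    rwa [Nat.card_congr (QuotientAddGroup.quotientKerEquivOfSurjective φ hsurj).toEquiv] at this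
  have h1 : Nat.card (Fin n → ZMod q) = q ^ n := by
    simp [Nat.card_eq_fintype_card, ZMod.card]
  have h2 : Nat.card (ZMod q) = q := by simp [Nat.card_eq_fintype_card, ZMod.card]
  have hker : Nat.card φ.ker = q ^ (n - 1) := by
    have hqn : q ^ n = q * q ^ (n - 1) := by
      conv_lhs => rw [show n = (n-1) + 1 by omega]
      rw [pow_succ]; ring
    rw [h1, h2, hqn] at hcard
    exact Nat.eq_of_mul_eq_mul_left hq hcard.symm
  have : Nat.card φ.ker = Nat.card {x : Fin n → ZMod q // ∑ i, x i * (s i : ZMod q) = 0} := by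
    apply Nat.card_congr
    apply Equiv.subtypeEquivRight
    intro x
    simp [AddMonoidHom.mem_ker, φ]
  rw [this, Nat.card_eq_fintype_card, Fintype.card_subtype] at hker
  exact hker


open Finset

lemma residue_fiber_card (q : ℕ) (hq : 0 < q) [NeZero q] (b : ℤ) (x : ZMod q) :
    ((Finset.Ico b (b + q)).filter (fun y : ℤ => (y : ZMod q) = x)).card = 1 := by
  rw [Finset.card_eq_one]
  set r : ℤ := ((x - (b : ZMod q)).val : ℤ) with hr
  have hrlt : r < (q : ℤ) := by
    rw [hr]; exact_mod_cast ZMod.val_lt (x - (b : ZMod q))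
  have hrnn : 0 ≤ r := Int.natCast_nonneg _
  have key : ((r : ℤ) : ZMod q) = x - (b : ZMod q) := by
    rw [hr]
    push_cast
    rw [ZMod.natCast_val, ZMod.cast_id]
  have hcast : ((b + r : ℤ) : ZMod q) = x := by push_cast; rw [key]; push_cast; ring
  refine ⟨b + r, ?_⟩
  ext y
  simp only [Finset.mem_filter, Finset.mem_Ico, Finset.mem_singleton]
  constructor
  · rintro ⟨⟨h1, h2⟩, h3⟩
    have h4 : ((y : ℤ) : ZMod q) = ((b + r : ℤ) : ZMod q) := h3.trans hcast.symm
    have hmod := (ZMod.intCast_eq_intCast_iff _ _ _).mp h4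
    have hdvd : (q : ℤ) ∣ (b + r - y) := hmod.dvd
    have habs : |b + r - y| < q := by rw [abs_lt]; omega
    have := Int.eq_zero_of_abs_lt_dvd hdvd habs
    omega
  · rintro rfl
    exact ⟨⟨by omega, by omega⟩, hcast⟩

-- pointwise filter on piFinset
lemma piFinset_filter_card {n : ℕ} (t : Fin n → Finset ℤ) (p : Fin n → ℤ → Prop)
    [∀ i y, Decidable (p i y)] :
    ((Fintype.piFinset t).filter (fun a => ∀ i, p i (a i))).card
      = ∏ i, ((t i).filter (p i)).card := by
  rw [← Fintype.card_piFinset]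
  congr 1
  ext a
  simp only [Finset.mem_filter, Fintype.mem_piFinset]
  exact ⟨fun h i => ⟨h.1 i, h.2 i⟩, fun h => ⟨fun i => (h i).1, fun i => (h i).2⟩⟩

noncomputable def Bq {n : ℕ} (q : ℕ) (t : Fin n → ℤ) : Finset (Fin n → ℤ) :=
  Fintype.piFinset fun i => Finset.Ico ((q : ℤ) * t i) ((q : ℤ) * t i + q)

lemma card_Bq {n : ℕ} (q : ℕ) (t : Fin n → ℤ) : (Bq q t).card = q ^ n := by
  rw [Bq, Fintype.card_piFinset]
  have : ∀ i : Fin n, (Finset.Ico ((q : ℤ) * t i) ((q : ℤ) * t i + q)).card = q := by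
    intro i
    rw [Int.card_Ico]
    simp
  simp [this]

lemma boxCount (n q : ℕ) (hn : 1 ≤ n) (hq : 0 < q) (s : Fin n → ℤ)
    (hs : Int.gcd (q : ℤ) (Finset.univ.gcd s) = 1) (t : Fin n → ℤ) :
    ((Bq q t).filter (fun a => (q : ℤ) ∣ ∑ i, a i * s i)).card = q ^ (n - 1) := by
  haveI : NeZero q := ⟨hq.ne'⟩
  classical
  set red : (Fin n → ℤ) → (Fin n → ZMod q) := fun a i => ((a i : ℤ) : ZMod q) with hred
  set ker : Finset (Fin n → ZMod q) :=
    Finset.univ.filter (fun x : Fin n → ZMod q => ∑ i, x i * (s i : ZMod q) = 0) with hker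
  -- dvd condition iff red in kernel
  have hcond : ∀ a : Fin n → ℤ, ((q : ℤ) ∣ ∑ i, a i * s i) ↔ red a ∈ ker := by
    intro a
    rw [hker, Finset.mem_filter]
    simp only [Finset.mem_univ, true_and]
    rw [← ZMod.intCast_zmod_eq_zero_iff_dvd]
    push_cast
    rfl
  have hmain : ((Bq q t).filter (fun a => (q : ℤ) ∣ ∑ i, a i * s i)).card
      = ∑ x ∈ ker, (((Bq q t).filter (fun a => (q : ℤ) ∣ ∑ i, a i * s i)).filter
          (fun a => red a = x)).card := by
    apply Finset.card_eq_sum_card_fiberwise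
    intro a ha
    exact (hcond a).mp (Finset.mem_filter.mp ha).2
  rw [hmain]
  have hfib : ∀ x ∈ ker, (((Bq q t).filter (fun a => (q : ℤ) ∣ ∑ i, a i * s i)).filter
      (fun a => red a = x)).card = 1 := by
    intro x hx
    have heq : ((Bq q t).filter (fun a => (q : ℤ) ∣ ∑ i, a i * s i)).filter
        (fun a => red a = x) = (Bq q t).filter (fun a => ∀ i, ((a i : ℤ) : ZMod q) = x i) := by
      ext a
      simp only [Finset.filter_filter, Finset.mem_filter]
      constructor
      · rintro ⟨hb, -, hrx⟩
        exact ⟨hb, fun i => congrFun hrx i⟩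
      · rintro ⟨hb, hp⟩
        have hra : red a = x := funext hp
        exact ⟨hb, (hcond a).mpr (hra ▸ hx), hra⟩
    have hcard := piFinset_filter_card (fun i => Finset.Ico ((q : ℤ) * t i) ((q : ℤ) * t i + q))
      (fun i y => ((y : ℤ) : ZMod q) = x i)
    rw [heq, Bq, hcard]
    simp [residue_fiber_card q hq]
  rw [Finset.sum_congr rfl hfib]
  simp only [Finset.sum_const, smul_eq_mul, mul_one]
  exact ker_count n q hn hq s hs


noncomputable def boxK (n K : ℕ) : Finset (Fin n → ℤ) :=
  Fintype.piFinset fun _ => Finset.Icc (-(K : ℤ)) (K : ℤ)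

def nrm {n : ℕ} (a : Fin n → ℤ) : ℕ := ∑ i, (a i).natAbs

noncomputable def SBall (n q : ℕ) (s : Fin n → ℤ) (K : ℕ) : Finset (Fin n → ℤ) :=
  (boxK n K).filter (fun a => ((q : ℤ) ∣ ∑ i, a i * s i) ∧ nrm a ≤ K)

noncomputable def ballF (n K : ℕ) : Finset (Fin n → ℤ) :=
  (boxK n K).filter (fun a => nrm a ≤ K)

section geometry
variable {n : ℕ}

lemma mem_boxK_of_nrm_le {a : Fin n → ℤ} {K : ℕ} (h : nrm a ≤ K) : a ∈ boxK n K := by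
  rw [boxK, Fintype.mem_piFinset]
  intro i
  rw [Finset.mem_Icc]
  have h1 : (a i).natAbs ≤ nrm a :=
    Finset.single_le_sum (f := fun j => (a j).natAbs) (fun j _ => Nat.zero_le _)
      (Finset.mem_univ i)
  have : (a i).natAbs ≤ K := le_trans h1 h
  omega

lemma mem_SBall {q K : ℕ} {s a : Fin n → ℤ} :
    a ∈ SBall n q s K ↔ ((q : ℤ) ∣ ∑ i, a i * s i) ∧ nrm a ≤ K := by
  rw [SBall, Finset.mem_filter]
  exact ⟨fun h => h.2, fun h => ⟨mem_boxK_of_nrm_le h.2, h⟩⟩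

lemma mem_ballF {K : ℕ} {a : Fin n → ℤ} : a ∈ ballF n K ↔ nrm a ≤ K := by
  rw [ballF, Finset.mem_filter]
  exact ⟨fun h => h.2, fun h => ⟨mem_boxK_of_nrm_le h, h⟩⟩

lemma mem_Bq {q : ℕ} {t a : Fin n → ℤ} :
    a ∈ Bq q t ↔ ∀ i, (q : ℤ) * t i ≤ a i ∧ a i < (q : ℤ) * t i + q := by
  rw [Bq, Fintype.mem_piFinset]
  simp [Finset.mem_Ico]

def fdiv (q : ℕ) (a : Fin n → ℤ) : Fin n → ℤ := fun i => a i / (q : ℤ)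

lemma mem_Bq_fdiv {q : ℕ} (hq : 0 < q) (a : Fin n → ℤ) : a ∈ Bq q (fdiv q a) := by
  rw [mem_Bq]
  intro i
  have hq' : (0 : ℤ) < q := by exact_mod_cast hq
  have h1 := Int.mul_ediv_add_emod (a i) q
  have h2 := Int.emod_nonneg (a i) hq'.ne'
  have h3 := Int.emod_lt_of_pos (a i) hq'
  constructor <;> [skip; skip] <;> simp only [fdiv] <;> omega

lemma Bq_disjoint {q : ℕ} (hq : 0 < q) {t t' : Fin n → ℤ} (h : t ≠ t') :
    Disjoint (Bq q t) (Bq q t') := by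
  rw [Finset.disjoint_left]
  intro a ha ha'
  apply h
  funext i
  have h1 := (mem_Bq.mp ha) i
  have h2 := (mem_Bq.mp ha') i
  have hq' : (0 : ℤ) < q := by exact_mod_cast hq
  by_contra hne
  rcases lt_or_gt_of_ne hne with hlt | hgt
  · have : (q : ℤ) * (t i + 1) ≤ (q : ℤ) * t' i :=
      mul_le_mul_of_nonneg_left (by omega) hq'.le
    rw [mul_add, mul_one] at this
    omega
  · have : (q : ℤ) * (t' i + 1) ≤ (q : ℤ) * t i :=
      mul_le_mul_of_nonneg_left (by omega) hq'.le
    rw [mul_add, mul_one] at this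
    omega

lemma nrm_Bq_le {q K : ℕ} {t a b : Fin n → ℤ} (ha : a ∈ Bq q t) (hb : b ∈ Bq q t)
    (h : nrm a ≤ K) : nrm b ≤ K + n * q := by
  have key : ∀ i, (b i).natAbs ≤ (a i).natAbs + q := by
    intro i
    have h1 := (mem_Bq.mp ha) i
    have h2 := (mem_Bq.mp hb) i
    omega
  have : nrm b ≤ ∑ i : Fin n, ((a i).natAbs + q) :=
    Finset.sum_le_sum (fun i _ => key i)
  rw [Finset.sum_add_distrib, Finset.sum_const, Finset.card_univ, Fintype.card_fin,
    smul_eq_mul] at this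
  have : nrm b ≤ nrm a + n * q := this
  omega

-- Upper bound: q * S(K) ≤ V(K + n*q)
lemma upper (n q : ℕ) (hn : 1 ≤ n) (hq : 0 < q) (s : Fin n → ℤ)
    (hs : Int.gcd (q : ℤ) (Finset.univ.gcd s) = 1) (K : ℕ) :
    q * (SBall n q s K).card ≤ (ballF n (K + n * q)).card := by
  classical
  set T : Finset (Fin n → ℤ) := (SBall n q s K).image (fdiv q) with hT
  have hfib : (SBall n q s K).card
      = ∑ t ∈ T, ((SBall n q s K).filter (fun a => fdiv q a = t)).card :=
    Finset.card_eq_sum_card_fiberwise (fun a ha => Finset.mem_image_of_mem _ ha)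
  have h1 : ∀ t ∈ T, ((SBall n q s K).filter (fun a => fdiv q a = t)).card ≤ q ^ (n - 1) := by
    intro t ht
    rw [← boxCount n q hn hq s hs t]
    apply Finset.card_le_card
    intro a ha
    rw [Finset.mem_filter] at ha ⊢
    obtain ⟨haS, hft⟩ := ha
    exact ⟨hft ▸ mem_Bq_fdiv hq a, (mem_SBall.mp haS).1⟩
  have h2 : (SBall n q s K).card ≤ T.card * q ^ (n - 1) := by
    rw [hfib]
    calc ∑ t ∈ T, ((SBall n q s K).filter (fun a => fdiv q a = t)).card
        ≤ ∑ t ∈ T, q ^ (n - 1) := Finset.sum_le_sum h1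
      _ = T.card * q ^ (n - 1) := by rw [Finset.sum_const, smul_eq_mul]
  have h3 : T.card * q ^ n ≤ (ballF n (K + n * q)).card := by
    have hsub : T.biUnion (Bq q) ⊆ ballF n (K + n * q) := by
      intro b hb
      rw [Finset.mem_biUnion] at hb
      obtain ⟨t, ht, hbt⟩ := hb
      obtain ⟨a, haS, hfa⟩ := Finset.mem_image.mp ht
      have haB : a ∈ Bq q t := hfa ▸ mem_Bq_fdiv hq a
      exact mem_ballF.mpr (nrm_Bq_le haB hbt (mem_SBall.mp haS).2)
    have hdisj : ∀ t ∈ T, ∀ t' ∈ T, t ≠ t' → Disjoint (Bq q t) (Bq q t') :=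
      fun t _ t' _ h => Bq_disjoint hq h
    calc T.card * q ^ n = ∑ t ∈ T, (Bq q t).card := by
          simp [card_Bq, Finset.sum_const, mul_comm]
      _ = (T.biUnion (Bq q)).card := (Finset.card_biUnion hdisj).symm
      _ ≤ (ballF n (K + n * q)).card := Finset.card_le_card hsub
  have hpow : q * q ^ (n - 1) = q ^ n := by
    rw [← pow_succ']
    congr 1
    omega
  calc q * (SBall n q s K).card ≤ q * (T.card * q ^ (n - 1)) := Nat.mul_le_mul_left q h2
    _ = T.card * (q * q ^ (n - 1)) := by ring
    _ = T.card * q ^ n := by rw [hpow]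
    _ ≤ (ballF n (K + n * q)).card := h3

-- Lower bound: V(K) ≤ q * S(K + n*q)
lemma lower (n q : ℕ) (hn : 1 ≤ n) (hq : 0 < q) (s : Fin n → ℤ)
    (hs : Int.gcd (q : ℤ) (Finset.univ.gcd s) = 1) (K : ℕ) :
    (ballF n K).card ≤ q * (SBall n q s (K + n * q)).card := by
  classical
  set T : Finset (Fin n → ℤ) := (ballF n K).image (fdiv q) with hT
  have hwit : ∀ t ∈ T, ∀ b ∈ Bq q t, nrm b ≤ K + n * q := by
    intro t ht b hbt
    obtain ⟨a, haB, hfa⟩ := Finset.mem_image.mp ht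
    exact nrm_Bq_le (hfa ▸ mem_Bq_fdiv hq a) hbt (mem_ballF.mp haB)
  have h1 : (ballF n K).card ≤ T.card * q ^ n := by
    have hsub : ballF n K ⊆ T.biUnion (Bq q) := by
      intro a ha
      rw [Finset.mem_biUnion]
      exact ⟨fdiv q a, Finset.mem_image_of_mem _ ha, mem_Bq_fdiv hq a⟩
    have hdisj : ∀ t ∈ T, ∀ t' ∈ T, t ≠ t' → Disjoint (Bq q t) (Bq q t') :=
      fun t _ t' _ h => Bq_disjoint hq h
    calc (ballF n K).card ≤ (T.biUnion (Bq q)).card := Finset.card_le_card hsub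
      _ = ∑ t ∈ T, (Bq q t).card := Finset.card_biUnion hdisj
      _ = T.card * q ^ n := by simp [card_Bq, Finset.sum_const, mul_comm]
  have h2 : T.card * q ^ (n - 1) ≤ (SBall n q s (K + n * q)).card := by
    have hsub : T.biUnion (fun t => (Bq q t).filter (fun a => (q : ℤ) ∣ ∑ i, a i * s i))
        ⊆ SBall n q s (K + n * q) := by
      intro b hb
      rw [Finset.mem_biUnion] at hb
      obtain ⟨t, ht, hbt⟩ := hb
      rw [Finset.mem_filter] at hbt
      exact mem_SBall.mpr ⟨hbt.2, hwit t ht b hbt.1⟩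
    have hdisj : ∀ t ∈ T, ∀ t' ∈ T, t ≠ t' →
        Disjoint ((Bq q t).filter (fun a => (q : ℤ) ∣ ∑ i, a i * s i))
          ((Bq q t').filter (fun a => (q : ℤ) ∣ ∑ i, a i * s i)) :=
      fun t _ t' _ h => Finset.disjoint_filter_filter (Bq_disjoint hq h)
    calc T.card * q ^ (n - 1)
        = ∑ t ∈ T, ((Bq q t).filter (fun a => (q : ℤ) ∣ ∑ i, a i * s i)).card := by
          rw [Finset.sum_congr rfl (fun t _ => boxCount n q hn hq s hs t)]
          rw [Finset.sum_const, smul_eq_mul]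
      _ = (T.biUnion (fun t => (Bq q t).filter (fun a => (q : ℤ) ∣ ∑ i, a i * s i))).card :=
          (Finset.card_biUnion hdisj).symm
      _ ≤ (SBall n q s (K + n * q)).card := Finset.card_le_card hsub
  have hpow : q * q ^ (n - 1) = q ^ n := by
    rw [← pow_succ']
    congr 1
    omega
  calc (ballF n K).card ≤ T.card * q ^ n := h1
    _ = q * (T.card * q ^ (n - 1)) := by rw [← hpow]; ring
    _ ≤ q * (SBall n q s (K + n * q)).card := Nat.mul_le_mul_left q h2

end geometry


open Finset Filter

lemma le_of_step (n a b c : ℕ) (hb : 0 < b) (S : ℕ → ℕ) (hS0 : 1 ≤ S 0)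
    (hSle : ∀ K, S K ≤ (2 * K + 1) ^ n)
    (hstep : ∀ K, a * S K ≤ b * S (K + c)) : a ≤ b := by
  by_contra hab
  push_neg at hab
  have hiter : ∀ m : ℕ, a ^ m * S 0 ≤ b ^ m * S (m * c) := by
    intro m
    induction m with
    | zero => simp
    | succ m ih =>
      calc a ^ (m + 1) * S 0 = a * (a ^ m * S 0) := by ring
        _ ≤ a * (b ^ m * S (m * c)) := Nat.mul_le_mul_left a ih
        _ = b ^ m * (a * S (m * c)) := by ring
        _ ≤ b ^ m * (b * S (m * c + c)) := Nat.mul_le_mul_left _ (hstep _)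
        _ = b ^ (m + 1) * S ((m + 1) * c) := by ring_nf
  have hkey : ∀ m : ℕ, a ^ m ≤ b ^ m * (2 * (m * c) + 1) ^ n := by
    intro m
    calc a ^ m ≤ a ^ m * S 0 := Nat.le_mul_of_pos_right _ hS0
      _ ≤ b ^ m * S (m * c) := hiter m
      _ ≤ b ^ m * (2 * (m * c) + 1) ^ n := Nat.mul_le_mul_left _ (hSle _)
  -- real contradiction
  set r : ℝ := (a : ℝ) / (b : ℝ) with hr
  have hb' : (0 : ℝ) < b := by exact_mod_cast hb
  have hr1 : 1 < r := by
    rw [hr, lt_div_iff₀ hb']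
    exact_mod_cast by linarith [hab]
  have htend := tendsto_pow_const_div_const_pow_of_one_lt n hr1
  have hev : ∀ᶠ m : ℕ in atTop, (m : ℝ) ^ n / r ^ m < 1 / (2 * c + 1) ^ n := by
    apply htend.eventually_lt_const
    positivity
  obtain ⟨m, hm, hm1⟩ := (hev.and (eventually_ge_atTop 1)).exists
  -- derive: b^m * (2*(m*c)+1)^n < a^m
  have h2 : ((2 * (m * c) + 1 : ℕ) : ℝ) ≤ (2 * c + 1 : ℝ) * m := by
    push_cast
    have : (1 : ℝ) ≤ m := by exact_mod_cast hm1
    nlinarith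
  have hcontra : ((b ^ m * (2 * (m * c) + 1) ^ n : ℕ) : ℝ) < ((a ^ m : ℕ) : ℝ) := by
    push_cast
    have hrm : (0 : ℝ) < r ^ m := pow_pos (by linarith) m
    have hmn : ((2 * (m * c) + 1 : ℕ) : ℝ) ^ n < r ^ m := by
      have hpos : (0:ℝ) < (2 * (c:ℝ) + 1) ^ n := by positivity
      have h6 : (m:ℝ) ^ n * (2 * (c:ℝ) + 1) ^ n < 1 * r ^ m :=
        (div_lt_div_iff₀ hrm hpos).mp hm
      calc ((2 * (m * c) + 1 : ℕ) : ℝ) ^ n ≤ ((2 * (c:ℝ) + 1) * m) ^ n :=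
            pow_le_pow_left₀ (by positivity) h2 n
        _ = (m:ℝ) ^ n * (2 * (c:ℝ) + 1) ^ n := by rw [mul_pow]; ring
        _ < 1 * r ^ m := h6
        _ = r ^ m := one_mul _
    have hbm : (0 : ℝ) < (b : ℝ) ^ m := pow_pos hb' m
    have : (b : ℝ) ^ m * ((2 * (m * c) + 1 : ℕ) : ℝ) ^ n < (b : ℝ) ^ m * r ^ m :=
      mul_lt_mul_of_pos_left hmn hbm
    have hram : (b : ℝ) ^ m * r ^ m = (a : ℝ) ^ m := by
      rw [hr, ← mul_pow, mul_div_assoc', mul_div_cancel_left₀ _ hb'.ne']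
    rw [hram] at this
    push_cast at this ⊢
    linarith [this]
  have := hkey m
  have : ((a ^ m : ℕ) : ℝ) ≤ ((b ^ m * (2 * (m * c) + 1) ^ n : ℕ) : ℝ) := by exact_mod_cast this
  linarith

lemma ballF_card_le (n K : ℕ) : (ballF n K).card ≤ (2 * K + 1) ^ n := by
  have h1 : (ballF n K).card ≤ (boxK n K).card :=
    Finset.card_le_card (Finset.filter_subset _ _)
  have h2 : (boxK n K).card = (2 * K + 1) ^ n := by
    rw [boxK, Fintype.card_piFinset]
    have h3 : ((K : ℤ) + 1 + K).toNat = 2 * K + 1 := by omega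
    simp [Int.card_Icc, h3]
  omega

lemma one_le_SBall (n q : ℕ) (s : Fin n → ℤ) : 1 ≤ (SBall n q s 0).card := by
  rw [Nat.one_le_iff_ne_zero, ← Nat.pos_iff_ne_zero, Finset.card_pos]
  refine ⟨0, mem_SBall.mpr ⟨?_, ?_⟩⟩
  · simp
  · simp [nrm]

lemma SBall_card_eq (n q : ℕ) (s : Fin n → ℤ) (K : ℕ) :
    (SBall n q s K).card = ∑ k ∈ Finset.range (K + 1),
      Set.ncard {a : Fin n → ℤ | ((q : ℤ) ∣ ∑ i, a i * s i) ∧ (∑ i, (a i).natAbs) = k} := by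
  classical
  have hlev : ∀ k : ℕ, {a : Fin n → ℤ | ((q : ℤ) ∣ ∑ i, a i * s i) ∧ (∑ i, (a i).natAbs) = k}
      = ↑((boxK n k).filter (fun a => ((q : ℤ) ∣ ∑ i, a i * s i) ∧ nrm a = k)) := by
    intro k
    ext a
    simp only [Set.mem_setOf_eq, Finset.coe_filter, Set.mem_setOf_eq]
    constructor
    · rintro ⟨hd, hk⟩
      exact ⟨mem_boxK_of_nrm_le (le_of_eq hk), hd, hk⟩
    · rintro ⟨-, hd, hk⟩
      exact ⟨hd, hk⟩
  have hfib : (SBall n q s K).card = ∑ k ∈ Finset.range (K + 1),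
      ((SBall n q s K).filter (fun a => nrm a = k)).card := by
    apply Finset.card_eq_sum_card_fiberwise
    intro a ha
    rw [Finset.mem_coe, Finset.mem_range, Nat.lt_succ_iff]
    exact (mem_SBall.mp ha).2
  rw [hfib]
  refine Finset.sum_congr rfl fun k hk => ?_
  rw [Finset.mem_range, Nat.lt_succ_iff] at hk
  rw [hlev k, Set.ncard_coe_finset]
  congr 1
  ext a
  simp only [Finset.mem_filter]
  constructor
  · rintro ⟨ha, hk'⟩
    obtain ⟨hd, -⟩ := mem_SBall.mp ha
    exact ⟨mem_boxK_of_nrm_le (le_of_eq hk'), hd, hk'⟩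
  · rintro ⟨-, hd, hk'⟩
    exact ⟨mem_SBall.mpr ⟨hd, hk' ▸ hk⟩, hk'⟩


/-- **The order of the fundamental group is a spectral invariant.**
If the congruence lattices `L_{q,s}` and `L_{q',s'}` (with `gcd(q,s) = 1 = gcd(q',s')`)
are one-norm isospectral, i.e. have the same number of elements of one-norm `k` for every
`k ≥ 0`, then `q = q'`. -/
theorem one_norm_isospectral_order_eq
    (n : ℕ) (hn : 1 ≤ n) (q q' : ℕ) (hq : 0 < q) (hq' : 0 < q')
    (s s' : Fin n → ℤ)
    (hs : Int.gcd (q : ℤ) (Finset.univ.gcd s) = 1)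
    (hs' : Int.gcd ((q' : ℤ)) (Finset.univ.gcd s') = 1)
    (h : ∀ k : ℕ,
      Set.ncard {a : Fin n → ℤ | (q : ℤ) ∣ (∑ i, a i * s i) ∧ (∑ i, (a i).natAbs) = k} =
      Set.ncard {a : Fin n → ℤ | (q' : ℤ) ∣ (∑ i, a i * s' i) ∧ (∑ i, (a i).natAbs) = k}) :
    q = q' := by
  have hSeq : ∀ K, (SBall n q s K).card = (SBall n q' s' K).card := by
    intro K
    rw [SBall_card_eq, SBall_card_eq]
    exact Finset.sum_congr rfl fun k _ => h k
  set c : ℕ := n * q + n * q' with hc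
  set S : ℕ → ℕ := fun K => (SBall n q s K).card with hSdef
  have hstep1 : ∀ K, q * S K ≤ q' * S (K + c) := by
    intro K
    calc q * S K ≤ (ballF n (K + n * q)).card := upper n q hn hq s hs K
      _ ≤ q' * (SBall n q' s' (K + n * q + n * q')).card :=
          lower n q' hn hq' s' hs' (K + n * q)
      _ = q' * S (K + c) := by
          rw [hSdef]
          simp only [hc]
          rw [← hSeq (K + n * q + n * q')]
          have harith : K + n * q + n * q' = K + (n * q + n * q') := by omega
          rw [harith]
  have hstep2 : ∀ K, q' * S K ≤ q * S (K + c) := by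
    intro K
    calc q' * S K = q' * (SBall n q' s' K).card := by rw [hSdef]; simp only []; rw [hSeq]
      _ ≤ (ballF n (K + n * q')).card := upper n q' hn hq' s' hs' K
      _ ≤ q * (SBall n q s (K + n * q' + n * q)).card :=
          lower n q hn hq s hs (K + n * q')
      _ = q * S (K + c) := by
          rw [hSdef]
          simp only [hc]
          have harith : K + n * q' + n * q = K + (n * q + n * q') := by omega
          rw [harith]
  have hSle : ∀ K, S K ≤ (2 * K + 1) ^ n := by
    intro K
    refine le_trans (Finset.card_le_card ?_) (ballF_card_le n K)
    intro a ha
    exact mem_ballF.mpr (mem_SBall.mp ha).2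
  have h0 : 1 ≤ S 0 := one_le_SBall n q s
  exact le_antisymm (le_of_step n q q' c hq' S h0 hSle hstep1)
    (le_of_step n q' q c hq S h0 hSle hstep2)
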